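/- Define G : [0,1/2] × [0,1/2] → ℝ by G(η,t) = 2(t − 1/2)²η² if 0 ≤ η ≤ t ≤ 1/2 and G(η,t) = 2(t − 1/2)²η² − (1/2)(η − t)² if 0 ≤ t ≤ η ≤ 1/2. Then G(η,t) ≥ 0 for all η, t ∈ [0,1/2], and for every η ∈ (0,1/2): ∫₀^η G(η,t) dt = (2/3)η³(1/2 − η)(1 − η) and ∫_η^{1/2} G(η,t) dt = (2/3)η²(1/2 − η)³. -/

import Mathlib

/-- The Green's function (1.2) of `G''' = δ(η − t)` on `[0,1/2]` with
`G(0,t) = G(1/2,t) = G'(0,t) = 0`. -/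
noncomputable def G (η t : ℝ) : ℝ :=
  if η ≤ t then 2 * (t - 1/2)^2 * η^2
  else 2 * (t - 1/2)^2 * η^2 - (1/2) * (η - t)^2

lemma deriv_aux (η t : ℝ) :
    HasDerivAt (fun s => 2*η^2*(s-1/2)^3/3 + (η-s)^3/6)
      (2*(t-1/2)^2*η^2 - (1/2)*(η-t)^2) t := by
  have h1 : HasDerivAt (fun s : ℝ => (s-1/2)^3) (3*(t-1/2)^2*1) t := by
    simpa using (((hasDerivAt_id t).sub_const ((1:ℝ)/2)).fun_pow 3)
  have h2 : HasDerivAt (fun s : ℝ => (η-s)^3) (3*(η-t)^2*(-1)) t :=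
    by simpa using (((hasDerivAt_const t η).fun_sub (hasDerivAt_id t)).fun_pow 3)
  have := ((h1.const_mul (2*η^2)).div_const 3).fun_add (h2.div_const 6)
  exact this.congr_deriv (by ring)

/-- Nonnegativity of the Green's function and the integral identities (1.2*). -/
theorem greens_function_nonneg_and_integrals :
    (∀ η ∈ Set.Icc (0:ℝ) (1/2), ∀ t ∈ Set.Icc (0:ℝ) (1/2), 0 ≤ G η t) ∧
    (∀ η ∈ Set.Ioo (0:ℝ) (1/2),
      (∫ t in (0:ℝ)..η, G η t) = (2/3) * η^3 * (1/2 - η) * (1 - η) ∧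
      (∫ t in η..(1/2:ℝ), G η t) = (2/3) * η^2 * (1/2 - η)^3) := by
  constructor
  · rintro η ⟨hη0, hη1⟩ t ⟨ht0, ht1⟩
    unfold G
    split_ifs with h
    · positivity
    · push_neg at h
      nlinarith [sq_nonneg (η - t), sq_nonneg η, mul_nonneg ht0 (sub_nonneg.mpr hη1),
        mul_nonneg (mul_nonneg ht0 hη0) (sub_nonneg.mpr hη1),
        sq_nonneg (2*(1/2-t)*η - (η-t)), sq_nonneg (2*(1/2-t)*η + (η-t))]
  · rintro η ⟨hη0, hη1⟩
    constructor
    · have hcong : (∫ t in (0:ℝ)..η, G η t)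
          = ∫ t in (0:ℝ)..η, (2*(t-1/2)^2*η^2 - (1/2)*(η-t)^2) := by
        apply intervalIntegral.integral_congr_ae
        have hne : ∀ᵐ t : ℝ ∂MeasureTheory.volume, t ≠ η := by
          refine MeasureTheory.ae_iff.mpr ?_
          simp [not_not]
        filter_upwards [hne] with t ht hmem
        rw [Set.uIoc_of_le (le_of_lt hη0)] at hmem
        have : ¬ η ≤ t := not_le.mpr (lt_of_le_of_ne hmem.2 ht)
        simp [G, this]
      rw [hcong, intervalIntegral.integral_eq_sub_of_hasDerivAt
        (fun t _ => deriv_aux η t)]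
      · ring
      · apply Continuous.intervalIntegrable
        continuity
    · have hcong : (∫ t in η..(1/2:ℝ), G η t)
          = ∫ t in η..(1/2:ℝ), (2*(t-1/2)^2*η^2) := by
        apply intervalIntegral.integral_congr
        intro t hmem
        rw [Set.uIcc_of_le (le_of_lt hη1)] at hmem
        simp [G, hmem.1]
      have hder : ∀ t : ℝ, HasDerivAt (fun s => 2*η^2*(s-1/2)^3/3)
          (2*(t-1/2)^2*η^2) t := by
        intro t
        have h1 : HasDerivAt (fun s : ℝ => (s-1/2)^3) (3*(t-1/2)^2*1) t := by
          simpa using (((hasDerivAt_id t).sub_const ((1:ℝ)/2)).fun_pow 3)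
        have := (h1.const_mul (2*η^2)).div_const 3
        exact this.congr_deriv (by ring)
      rw [hcong, intervalIntegral.integral_eq_sub_of_hasDerivAt (fun t _ => hder t)]
      · ring
      · apply Continuous.intervalIntegrable
        continuity
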